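/- Let (Ω,Σ,μ) be a measure space, let n ∈ ℕ, and set p = 2n/(2n−1). If E is a finite-dimensional subspace of L_{2n}(μ), then there exists a finite-dimensional subspace F of L_p(μ) = L_{2n}(μ)* such that ρ(E ∩ S_{L_{2n}(μ)}) ⊆ F, where ρ: S_{L_{2n}(μ)} → S_{L_p(μ)} is the spherical image map; explicitly, ρ(f) = f^{n−1}·(conj f)^n (pointwise product) for every f ∈ S_{L_{2n}(μ)}, and if E = span{v₁,…,v_r} one may take F to be the linear span of the finitely many pointwise products v₁^{k₁}···v_r^{k_r}·(conj v₁)^{j₁}···(conj v_r)^{j_r} with k₁+…+k_r = n−1 and j₁+…+j_r = n. -/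

import Mathlib

open MeasureTheory Metric Set Filter TopologicalSpace
open scoped ENNReal

noncomputable section

variable {𝕜 : Type*} [RCLike 𝕜]
variable {X : Type*} [NormedAddCommGroup X] [NormedSpace 𝕜 X]
variable {Y : Type*} [NormedAddCommGroup Y] [NormedSpace 𝕜 Y]
variable {T : Type*} [NormedAddCommGroup T] [NormedSpace 𝕜 T]
variable [NormedSpace ℝ T] [IsScalarTower ℝ 𝕜 T]

/-- `T`, together with the continuous bilinear map `tmul`, is a realization of the
projective tensor product `X ⊗̂_π Y`: it is complete, the span of elementary tensors
`x ⊗ y = tmul x y` is dense, and on that span the norm is the projective norm. -/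
structure IsProjTensor (tmul : X →L[𝕜] Y →L[𝕜] T) : Prop where
  complete : CompleteSpace T
  dense_span :
    Dense ((Submodule.span 𝕜 (Set.range fun p : X × Y => tmul p.1 p.2) : Submodule 𝕜 T) : Set T)
  norm_eq : ∀ z : T,
    z ∈ Submodule.span 𝕜 (Set.range fun p : X × Y => tmul p.1 p.2) →
    ‖z‖ = sInf { c : ℝ | ∃ (m : ℕ) (x : Fin m → X) (y : Fin m → Y),
      z = ∑ i, tmul (x i) (y i) ∧ c = ∑ i, ‖x i‖ * ‖y i‖ }

/-- `u` attains its projective norm (`u ∈ NA_π(X ⊗̂_π Y)`): it admits a representation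
`u = ∑ λ_n x_n ⊗ y_n` with `x_n ∈ B_X`, `y_n ∈ B_Y`, `λ_n ≥ 0` and `∑ λ_n = ‖u‖_π`. -/
def NApi (tmul : X →L[𝕜] Y →L[𝕜] T) (u : T) : Prop :=
  ∃ (x : ℕ → X) (y : ℕ → Y) (l : ℕ → ℝ),
    (∀ n, ‖x n‖ ≤ 1) ∧ (∀ n, ‖y n‖ ≤ 1) ∧ (∀ n, 0 ≤ l n) ∧
    HasSum (fun n => (l n : 𝕜) • tmul (x n) (y n)) u ∧ HasSum l ‖u‖

/-- `u` is finitely norm-attaining (`u ∈ FNA_π(X ⊗̂_π Y)`): it admits a finite optimal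
representation `u = ∑_{k<m} x_k ⊗ y_k` with `∑_{k<m} ‖x_k‖‖y_k‖ = ‖u‖_π`. -/
def FNApi (tmul : X →L[𝕜] Y →L[𝕜] T) (u : T) : Prop :=
  ∃ (m : ℕ) (x : Fin m → X) (y : Fin m → Y),
    u = ∑ i, tmul (x i) (y i) ∧ ∑ i, ‖x i‖ * ‖y i‖ = ‖u‖

/-- `u` is an integral projective norm-attaining tensor witnessed by `μ`: `μ` is a finite
positive Borel measure concentrated on `B_X × B_Y`, the map `(x, y) ↦ x ⊗ y` is
`μ`-Bochner integrable, `u = ∫ x ⊗ y ∂μ` and `‖μ‖ = ‖u‖_π`. -/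
def INApiWitness [MeasurableSpace X] [MeasurableSpace Y]
    (tmul : X →L[𝕜] Y →L[𝕜] T) (u : T) (μ : Measure (X × Y)) : Prop :=
  IsFiniteMeasure μ ∧
  μ ((closedBall (0 : X) 1 ×ˢ closedBall (0 : Y) 1)ᶜ) = 0 ∧
  Integrable (fun p : X × Y => tmul p.1 p.2) μ ∧
  u = ∫ p, tmul p.1 p.2 ∂μ ∧
  (μ Set.univ).toReal = ‖u‖

/-- `u ∈ INA_π(X ⊗̂_π Y)`: `u` is an integral projective norm-attaining tensor. -/
def INApi [MeasurableSpace X] [MeasurableSpace Y]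
    (tmul : X →L[𝕜] Y →L[𝕜] T) (u : T) : Prop :=
  ∃ μ : Measure (X × Y), INApiWitness tmul u μ


namespace Stmt16Aux

variable {𝕜 : Type*} [RCLike 𝕜] {Ω : Type*} [MeasurableSpace Ω] {μ : Measure Ω}

lemma memLp_conj {u : Ω → 𝕜} {s : ℝ≥0∞} (h : MemLp u s μ) :
    MemLp (fun ω => (starRingEnd 𝕜) (u ω)) s μ :=
  h.congr_norm (RCLike.continuous_conj.comp_aestronglyMeasurable h.1)
    (Eventually.of_forall fun ω => (RCLike.norm_conj (u ω)).symm)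

lemma one_div_div_nat (N : ℝ≥0∞) (hN : N ≠ 0) (k : ℕ) :
    1 / (N / (k : ℝ≥0∞)) = (k : ℝ≥0∞) / N := by
  rw [one_div, ENNReal.inv_div (Or.inl (ENNReal.natCast_ne_top _)) (Or.inr hN)]

lemma memLp_prod_fin (N : ℝ≥0∞) (hN : N ≠ 0) (k : ℕ) (u : Fin k → Ω → 𝕜)
    (hu : ∀ t, MemLp (u t) N μ) :
    MemLp (fun ω => ∏ t, u t ω) (N / (k : ℝ≥0∞)) μ := by
  induction k with
  | zero =>
    simp only [Nat.cast_zero, ENNReal.div_zero hN]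
    simpa using memLp_top_const (1 : 𝕜)
  | succ k ih =>
    have h2 : MemLp (fun ω => ∏ t : Fin k, u t.succ ω) (N / (k : ℝ≥0∞)) μ :=
      ih _ (fun t => hu _)
    have hpqr : 1 / (N / ((k + 1 : ℕ) : ℝ≥0∞)) = 1 / N + 1 / (N / (k : ℝ≥0∞)) := by
      rw [one_div_div_nat N hN, one_div_div_nat N hN, one_div,
        show ((k + 1 : ℕ) : ℝ≥0∞) = 1 + (k : ℝ≥0∞) by push_cast; ring,
        ← ENNReal.div_add_div_same, one_div]
    have hc := h2.smul (hu 0) (hpqr := ⟨by simpa only [one_div] using hpqr.symm⟩)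
    have heq : ((u 0) • fun ω => ∏ t : Fin k, u t.succ ω)
        = fun ω => ∏ t : Fin (k + 1), u t ω := by
      funext ω
      simp [Pi.smul_apply', smul_eq_mul, Fin.prod_univ_succ]
    rwa [heq] at hc


lemma coeFn_finset_sum {p : ℝ≥0∞} {ι : Type*} (s : Finset ι) (h : ι → Lp 𝕜 p μ) :
    ⇑(∑ i ∈ s, h i) =ᵐ[μ] fun ω => ∑ i ∈ s, h i ω := by
  classical
  induction s using Finset.cons_induction with
  | empty => simpa [Pi.zero_def] using Lp.coeFn_zero 𝕜 p μ
  | cons a s ha ih =>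
    rw [Finset.sum_cons]
    filter_upwards [Lp.coeFn_add (h a) (∑ i ∈ s, h i), ih] with ω h1 h2
    rw [h1, Pi.add_apply, h2, Finset.sum_cons]

lemma expand_aux {R : Type*} [CommRing R] {r : ℕ} (m k : ℕ) (c d V W : Fin r → R) :
    (∑ i, c i * V i) ^ m * (∑ i, d i * W i) ^ k =
      ∑ ab : (Fin m → Fin r) × (Fin k → Fin r),
        ((∏ t, c (ab.1 t)) * ∏ t, d (ab.2 t)) *
          ((∏ t, V (ab.1 t)) * ∏ t, W (ab.2 t)) := by
  classical
  have h1 : ∀ (l : ℕ) (e U : Fin r → R),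
      (∑ i, e i * U i) ^ l
        = ∑ a : Fin l → Fin r, (∏ t, e (a t)) * ∏ t, U (a t) := by
    intro l e U
    calc (∑ i, e i * U i) ^ l = ∏ _t : Fin l, (∑ i, e i * U i) := by
          simp [Finset.prod_const]
      _ = ∑ a ∈ Fintype.piFinset (fun _ : Fin l => (Finset.univ : Finset (Fin r))),
            ∏ t, (e (a t) * U (a t)) := Finset.prod_univ_sum _ _
      _ = ∑ a : Fin l → Fin r, (∏ t, e (a t)) * ∏ t, U (a t) := by
          rw [Fintype.piFinset_univ]
          exact Finset.sum_congr rfl fun a _ => Finset.prod_mul_distrib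
  rw [h1 m c V, h1 k d W, Finset.sum_mul_sum, Fintype.sum_prod_type]
  exact Finset.sum_congr rfl fun a _ => Finset.sum_congr rfl fun b _ => by ring

end Stmt16Aux

open Stmt16Aux

/-- Lemma 4.5: the spherical image map of `L_{2n}(μ)` maps finite-dimensional subspaces
into a finite-dimensional subspace of `L_p(μ)`, `p = 2n/(2n-1)`, explicitly given by
`ρ(f) = f^(n-1) · (conj f)^n`. -/
theorem stmt_16 {Ω : Type*} [MeasurableSpace Ω] (μ : Measure Ω)
    (n : ℕ) (hn : 1 ≤ n) (p q : ℝ≥0∞)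
    (hq : q = 2 * n) (hp : p = 2 * n / (2 * n - 1))
    [Fact (1 ≤ p)] [Fact (1 ≤ q)]
    (E : Submodule 𝕜 (Lp 𝕜 q μ)) (hE : FiniteDimensional 𝕜 E) :
    ∃ F : Submodule 𝕜 (Lp 𝕜 p μ), FiniteDimensional 𝕜 F ∧
      ∀ f : Lp 𝕜 q μ, f ∈ E → ‖f‖ = 1 →
        ∀ g : Lp 𝕜 p μ,
          (g : Ω → 𝕜) =ᵐ[μ]
            (fun ω => (f ω) ^ (n - 1) * (starRingEnd 𝕜 (f ω)) ^ n) →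
          ‖g‖ = 1 ∧ (∫ ω, (f ω) * (g ω) ∂μ) = 1 ∧ g ∈ F := by
  classical
  obtain ⟨m, rfl⟩ : ∃ m, n = m + 1 := ⟨n - 1, (Nat.succ_pred_eq_of_pos hn).symm⟩
  haveI := hE
  -- exponent bookkeeping
  have hq' : q = ((2 * m + 2 : ℕ) : ℝ≥0∞) := by rw [hq]; push_cast; ring
  have hq0 : q ≠ 0 := by rw [hq']; simp
  have hqt : q ≠ ∞ := by rw [hq']; exact ENNReal.natCast_ne_top _
  have hsub : (2 * ((m + 1 : ℕ) : ℝ≥0∞) - 1) = ((2 * m + 1 : ℕ) : ℝ≥0∞) := by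
    push_cast
    rw [show (2 : ℝ≥0∞) * (↑m + 1) = (2 * ↑m + 1) + 1 by ring]
    exact ENNReal.add_sub_cancel_right (by simp)
  have hp'' : p = q / ((2 * m + 1 : ℕ) : ℝ≥0∞) := by rw [hp, hq, hsub]
  have hp0 : p ≠ 0 := by
    rw [hp'']
    exact ENNReal.div_ne_zero.mpr ⟨hq0, ENNReal.natCast_ne_top _⟩
  have hpt : p ≠ ∞ := by
    rw [hp'']
    exact (ENNReal.div_lt_top hqt (Nat.cast_ne_zero.mpr (by omega))).ne
  have hqreal : q.toReal = ((2 * m + 2 : ℕ) : ℝ) := by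
    rw [hq', ENNReal.toReal_natCast]
  have hpreal : p.toReal = ((2 * m + 2 : ℕ) : ℝ) / ((2 * m + 1 : ℕ) : ℝ) := by
    rw [hp'', hq', ENNReal.toReal_div, ENNReal.toReal_natCast, ENNReal.toReal_natCast]
  -- basis and monomials
  set r := Module.finrank 𝕜 E with hr
  let b : Module.Basis (Fin r) 𝕜 E := Module.finBasis 𝕜 E
  let vf : Fin r → Ω → 𝕜 := fun i => ((b i : Lp 𝕜 q μ) : Ω → 𝕜)
  let ι := (Fin m → Fin r) × (Fin (m + 1) → Fin r)
  let Mfun : ι → Ω → 𝕜 := fun ab ω =>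
    (∏ t, vf (ab.1 t) ω) * ∏ t, (starRingEnd 𝕜) (vf (ab.2 t) ω)
  have hpqr2 : 1 / p = 1 / (q / (m : ℝ≥0∞)) + 1 / (q / ((m + 1 : ℕ) : ℝ≥0∞)) := by
    rw [one_div_div_nat q hq0, one_div_div_nat q hq0, hp'', one_div_div_nat q hq0,
      ENNReal.div_add_div_same]
    congr 1
    push_cast; ring
  have hM : ∀ ab : ι, MemLp (Mfun ab) p μ := by
    intro ab
    have h1 : MemLp (fun ω => ∏ t : Fin m, vf (ab.1 t) ω) (q / (m : ℝ≥0∞)) μ :=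
      memLp_prod_fin q hq0 m _ (fun t => Lp.memLp _)
    have h2 : MemLp (fun ω => ∏ t : Fin (m + 1), (starRingEnd 𝕜) (vf (ab.2 t) ω))
        (q / ((m + 1 : ℕ) : ℝ≥0∞)) μ :=
      memLp_prod_fin q hq0 (m + 1) _ (fun t => memLp_conj (Lp.memLp _))
    have h3 := h2.smul h1 (hpqr := ⟨by simpa only [one_div] using hpqr2.symm⟩)
    have heq : ((fun ω => ∏ t : Fin m, vf (ab.1 t) ω) •
        fun ω => ∏ t : Fin (m + 1), (starRingEnd 𝕜) (vf (ab.2 t) ω)) = Mfun ab := by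
      funext ω; simp [Mfun, Pi.smul_apply', smul_eq_mul]
    rwa [heq] at h3
  let M : ι → Lp 𝕜 p μ := fun ab => (hM ab).toLp _
  refine ⟨Submodule.span 𝕜 (Set.range M), ?_, ?_⟩
  · exact FiniteDimensional.span_of_finite 𝕜 (Set.finite_range M)
  intro f hfE hf1 g hg
  -- Part 1: the norm of g
  have hfe : eLpNorm (⇑f) q μ = 1 := by
    rw [Lp.norm_def] at hf1
    exact (ENNReal.toReal_eq_one_iff _).mp hf1
  have hq0' : q.toReal ≠ 0 := by rw [hqreal]; positivity
  have hlq := eLpNorm_eq_lintegral_rpow_enorm_toReal hq0 hqt (f := ⇑f) (μ := μ)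
  have hlq1 : (∫⁻ ω, (‖f ω‖₊ : ℝ≥0∞) ^ q.toReal ∂μ) ^ (1 / q.toReal) = 1 :=
    hlq.symm.trans hfe
  have hInt : ∫⁻ ω, (‖f ω‖₊ : ℝ≥0∞) ^ q.toReal ∂μ = 1 := by
    calc (∫⁻ ω, (‖f ω‖₊ : ℝ≥0∞) ^ q.toReal ∂μ)
        = ((∫⁻ ω, (‖f ω‖₊ : ℝ≥0∞) ^ q.toReal ∂μ) ^ (1 / q.toReal)) ^ q.toReal := by
          rw [← ENNReal.rpow_mul, one_div, inv_mul_cancel₀ hq0', ENNReal.rpow_one]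
      _ = 1 ^ q.toReal := by rw [hlq1]
      _ = 1 := ENNReal.one_rpow _
  have hcast : ((2 * m + 1 : ℕ) : ℝ) * p.toReal = q.toReal := by
    rw [hpreal, hqreal]
    have h0 : ((2 * m + 1 : ℕ) : ℝ) ≠ 0 := by positivity
    field_simp
  have hgnn : ∀ᵐ ω ∂μ, (‖g ω‖₊ : ℝ≥0∞) ^ p.toReal = (‖f ω‖₊ : ℝ≥0∞) ^ q.toReal := by
    filter_upwards [hg] with ω hω
    rw [hω]
    have hnn : ‖f ω ^ (m + 1 - 1) * (starRingEnd 𝕜) (f ω) ^ (m + 1)‖₊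
        = ‖f ω‖₊ ^ (2 * m + 1) := by
      rw [nnnorm_mul, nnnorm_pow, nnnorm_pow, RCLike.nnnorm_conj, ← pow_add]
      congr 1
      omega
    rw [hnn, ENNReal.coe_pow, ← ENNReal.rpow_natCast, ← ENNReal.rpow_mul, hcast]
  have hge : eLpNorm (⇑g) p μ = 1 := by
    rw [eLpNorm_eq_lintegral_rpow_enorm_toReal hp0 hpt]; simp only [enorm_eq_nnnorm]; rw [lintegral_congr_ae hgnn, hInt,
      ENNReal.one_rpow]
  have hg1 : ‖g‖ = 1 := by rw [Lp.norm_def, hge, ENNReal.toReal_one]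
  -- Part 2: the integral
  have hfgae : (fun ω => f ω * g ω) =ᵐ[μ] fun ω => ((‖f ω‖ ^ (2 * m + 2) : ℝ) : 𝕜) := by
    filter_upwards [hg] with ω hω
    rw [hω]
    have h1 : f ω * (f ω ^ (m + 1 - 1) * (starRingEnd 𝕜) (f ω) ^ (m + 1))
        = (f ω * (starRingEnd 𝕜) (f ω)) ^ (m + 1) := by
      rw [Nat.add_sub_cancel]; ring
    rw [h1, RCLike.mul_conj]
    norm_cast
    rw [← pow_mul, Nat.mul_add, Nat.mul_one]
  have hIntR : Integrable (fun ω => ‖f ω‖ ^ (2 * m + 2)) μ := by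
    have h := (Lp.memLp f).integrable_norm_rpow hq0 hqt
    have heq : (fun ω => ‖f ω‖ ^ q.toReal) = fun ω => ‖f ω‖ ^ (2 * m + 2) := by
      funext ω
      rw [hqreal, Real.rpow_natCast]
    rwa [heq] at h
  have hIntVal : ∫ ω, ‖f ω‖ ^ (2 * m + 2) ∂μ = 1 := by
    have h := MeasureTheory.ofReal_integral_eq_lintegral_ofReal hIntR
      (Eventually.of_forall fun ω => by positivity)
    have h2 : ∫⁻ ω, ENNReal.ofReal (‖f ω‖ ^ (2 * m + 2)) ∂μ = 1 := by
      rw [← hInt]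
      refine lintegral_congr fun ω => ?_
      rw [ENNReal.ofReal_pow (norm_nonneg _), ofReal_norm, enorm_eq_nnnorm, hqreal,
        ENNReal.rpow_natCast]
    rw [h2] at h
    have h3 : (0:ℝ) ≤ ∫ ω, ‖f ω‖ ^ (2 * m + 2) ∂μ := integral_nonneg fun ω => by positivity
    calc ∫ ω, ‖f ω‖ ^ (2 * m + 2) ∂μ
        = (ENNReal.ofReal (∫ ω, ‖f ω‖ ^ (2 * m + 2) ∂μ)).toReal :=
          (ENNReal.toReal_ofReal h3).symm
      _ = 1 := by rw [h]; simp
  have hint1 : (∫ ω, f ω * g ω ∂μ) = 1 := by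
    rw [integral_congr_ae hfgae, integral_ofReal, hIntVal, RCLike.ofReal_one]
  -- Part 3: membership in F
  refine ⟨hg1, hint1, ?_⟩
  let cc : Fin r → 𝕜 := fun i => b.repr ⟨f, hfE⟩ i
  have hsumE : (∑ i, cc i • ((b i : E) : Lp 𝕜 q μ)) = f := by
    have h := congrArg (E.subtype) (b.sum_repr ⟨f, hfE⟩)
    simpa only [map_sum, map_smul, Submodule.subtype_apply] using h
  have hrep : ⇑f =ᵐ[μ] fun ω => ∑ i, cc i * vf i ω := by
    have h1 : ⇑f =ᵐ[μ] ⇑(∑ i, cc i • ((b i : E) : Lp 𝕜 q μ)) := by rw [hsumE]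
    refine h1.trans ?_
    refine (coeFn_finset_sum (μ := μ) Finset.univ
      (fun i => cc i • ((b i : E) : Lp 𝕜 q μ))).trans ?_
    have h3 : ∀ᵐ ω ∂μ, ∀ i : Fin r,
        (cc i • ((b i : E) : Lp 𝕜 q μ)) ω = cc i * vf i ω := by
      rw [ae_all_iff]
      intro i
      filter_upwards [Lp.coeFn_smul (cc i) (((b i : E) : Lp 𝕜 q μ))] with ω hω
      rw [hω]
      simp [vf, smul_eq_mul]
    filter_upwards [h3] with ω hω
    exact Finset.sum_congr rfl fun i _ => hω i
  let coeff : ι → 𝕜 := fun ab => (∏ t, cc (ab.1 t)) * ∏ t, (starRingEnd 𝕜) (cc (ab.2 t))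
  have hMc : ∀ᵐ ω ∂μ, ∀ ab : ι, (coeff ab • M ab) ω = coeff ab * Mfun ab ω := by
    rw [ae_all_iff]
    intro ab
    filter_upwards [Lp.coeFn_smul (coeff ab) (M ab), (hM ab).coeFn_toLp] with ω h1 h2
    rw [h1, Pi.smul_apply, smul_eq_mul, h2]
  have hgsum : ⇑g =ᵐ[μ] ⇑(∑ ab : ι, coeff ab • M ab) := by
    have h4 := coeFn_finset_sum (μ := μ) Finset.univ (fun ab : ι => coeff ab • M ab)
    filter_upwards [hg, hrep, h4, hMc] with ω h1 h2 h3 h5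
    rw [h1, h3]
    have hconj : (starRingEnd 𝕜) (f ω)
        = ∑ i, (starRingEnd 𝕜) (cc i) * (starRingEnd 𝕜) (vf i ω) := by
      rw [h2]
      simp [map_sum, map_mul]
    rw [hconj, h2, Nat.add_sub_cancel,
      expand_aux m (m + 1) cc (fun i => (starRingEnd 𝕜) (cc i)) (fun i => vf i ω)
        (fun i => (starRingEnd 𝕜) (vf i ω))]
    refine Finset.sum_congr rfl fun ab _ => ?_
    rw [h5 ab]
  have hgeq : g = ∑ ab : ι, coeff ab • M ab := Lp.ext hgsum
  rw [hgeq]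
  exact Submodule.sum_mem _ fun ab _ => Submodule.smul_mem _ _
    (Submodule.subset_span ⟨ab, rfl⟩)
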